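/- arXiv:1411.4339 — 2 statements merged into one kernel-verified Lean document; each statement's English description precedes it below -/
import Mathlib

section
/- Let X* ∈ F. Then X* satisfies the first-order optimality condition ⟨∇f(X*) | X − X*⟩ ≥ 0 for every X ∈ F if and only if N(X*) = 0, where N(X) := ⟨∇f(X) | D(X)⟩. -/
set_option autoImplicit false

open Matrix Set Filter

attribute [local instance] Matrix.normedAddCommGroup Matrix.normedSpace

namespace BoxSDP

open scoped Classical

/-- Trace inner product `⟨A|B⟩ = Trace(Aᵀ B)`. -/
noncomputable def mip {m k : Type*} [Fintype m] [Fintype k]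
    (A B : Matrix m k ℝ) : ℝ :=
  (Aᵀ * B).trace

/-- Frobenius norm `‖A‖_F = √⟨A|A⟩`. -/
noncomputable def fnorm {m k : Type*} [Fintype m] [Fintype k]
    (A : Matrix m k ℝ) : ℝ :=
  Real.sqrt (mip A A)

/-- The feasible set `F = {X : O ⪯ X ⪯ I}` (membership forces symmetry). -/
def Feas (n : ℕ) : Set (Matrix (Fin n) (Fin n) ℝ) :=
  {X | X.PosSemidef ∧ (1 - X).PosSemidef}

/-- Square root of a positive semidefinite matrix (junk value `0` otherwise);
agrees with `A^{1/2} = Q K^{1/2} Qᵀ` on positive semidefinite matrices. -/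
noncomputable def psqrt {m : Type*} [Fintype m] [DecidableEq m]
    (A : Matrix m m ℝ) : Matrix m m ℝ :=
  if h : A.PosSemidef then
    h.1.eigenvectorUnitary.1 * Matrix.diagonal ((↑) ∘ (√·) ∘ h.1.eigenvalues) *
      (star h.1.eigenvectorUnitary : Matrix m m ℝ)
  else 0

/-- Fourth root `A^{1/4}` of a positive semidefinite matrix. -/
noncomputable def proot4 {m : Type*} [Fintype m] [DecidableEq m]
    (A : Matrix m m ℝ) : Matrix m m ℝ :=
  psqrt (psqrt A)

/-- The 2-norm of a symmetric matrix: its largest absolute eigenvalue. -/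
noncomputable def norm2 {m : Type*} [Fintype m] [DecidableEq m]
    (A : Matrix m m ℝ) : ℝ :=
  if h : A.IsHermitian then sSup (Set.range fun i => |h.eigenvalues i|) else 0

/-- The linear functional `H ↦ ⟨G|H⟩`, as a continuous linear map; a function
`f` has gradient matrix `G` at `X` iff `HasFDerivAt f (gradCLM G) X`. -/
noncomputable def gradCLM {n : ℕ} (G : Matrix (Fin n) (Fin n) ℝ) :
    Matrix (Fin n) (Fin n) ℝ →L[ℝ] ℝ :=
  LinearMap.toContinuousLinearMap
    { toFun := fun H => mip G H
      map_add' := fun x y => by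
        simp [mip, Matrix.mul_add]
      map_smul' := fun c x => by
        simp [mip, Matrix.mul_smul] }

/-- The Hessian bilinear form `⟨A | ∇²f(X) | B⟩` induced by the derivative
`hessOp` of the gradient map. -/
noncomputable def hform {n : ℕ}
    (hessOp : Matrix (Fin n) (Fin n) ℝ →L[ℝ] Matrix (Fin n) (Fin n) ℝ)
    (A B : Matrix (Fin n) (Fin n) ℝ) : ℝ :=
  mip A (hessOp B)

/-- `underline-f`: the minimum of `⟨G | Y − X̂⟩` over `Y ∈ F`. -/
noncomputable def underf {n : ℕ} (G Xh : Matrix (Fin n) (Fin n) ℝ) : ℝ :=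
  sInf ((fun Y => mip G (Y - Xh)) '' Feas n)

/-- First-order optimality condition at `Xs` for gradient matrix `G`. -/
def FirstOrderOpt {n : ℕ} (G Xs : Matrix (Fin n) (Fin n) ℝ) : Prop :=
  ∀ X ∈ Feas n, 0 ≤ mip G (X - Xs)

/-- A fixed eigenvalue decomposition `G = P Γ Pᵀ` of a symmetric matrix `G`,
with eigenvalues in descending order, split into the block `Pp, gp` of
positive eigenvalues and the block `Pm, gm` of nonpositive eigenvalues. -/
structure SpecDecomp (n : ℕ) (G : Matrix (Fin n) (Fin n) ℝ) where
  np : ℕ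
  nm : ℕ
  hdim : np + nm = n
  Pp : Matrix (Fin n) (Fin np) ℝ
  Pm : Matrix (Fin n) (Fin nm) ℝ
  gp : Fin np → ℝ
  gm : Fin nm → ℝ
  hgp_pos : ∀ i, 0 < gp i
  hgm_nonpos : ∀ j, gm j ≤ 0
  hgp_anti : ∀ i j : Fin np, i ≤ j → gp j ≤ gp i
  hgm_anti : ∀ i j : Fin nm, i ≤ j → gm j ≤ gm i
  hPp_orth : Ppᵀ * Pp = 1
  hPm_orth : Pmᵀ * Pm = 1
  hPpPm : Ppᵀ * Pm = 0
  hPPT : Pp * Ppᵀ + Pm * Pmᵀ = 1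
  hG : G = Pp * Matrix.diagonal gp * Ppᵀ + Pm * Matrix.diagonal gm * Pmᵀ

namespace SpecDecomp

variable {n : ℕ} {G : Matrix (Fin n) (Fin n) ℝ}

/-- `V₊(X) = P₊ᵀ X P₊`. -/
def Vp (sd : SpecDecomp n G) (X : Matrix (Fin n) (Fin n) ℝ) :
    Matrix (Fin sd.np) (Fin sd.np) ℝ :=
  sd.Ppᵀ * X * sd.Pp

/-- `V₋(X) = P₋ᵀ (I − X) P₋`. -/
def Vm (sd : SpecDecomp n G) (X : Matrix (Fin n) (Fin n) ℝ) :
    Matrix (Fin sd.nm) (Fin sd.nm) ℝ :=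
  sd.Pmᵀ * (1 - X) * sd.Pm

/-- The search direction `D(X) = P M Pᵀ` with blocks
`M₁₁ = V₊^{1/2} Γ₊ V₊^{1/2}`, `M₁₂ = γ_max P₊ᵀ X P₋`,
`M₂₁ = γ_max P₋ᵀ X P₊`, `M₂₂ = V₋^{1/2} Γ₋ V₋^{1/2}`. -/
noncomputable def Dmat (sd : SpecDecomp n G) (X : Matrix (Fin n) (Fin n) ℝ) :
    Matrix (Fin n) (Fin n) ℝ :=
  sd.Pp * (psqrt (sd.Vp X) * Matrix.diagonal sd.gp * psqrt (sd.Vp X)) * sd.Ppᵀ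
    + norm2 G • (sd.Pp * (sd.Ppᵀ * X * sd.Pm) * sd.Pmᵀ)
    + norm2 G • (sd.Pm * (sd.Pmᵀ * X * sd.Pp) * sd.Ppᵀ)
    + sd.Pm * (psqrt (sd.Vm X) * Matrix.diagonal sd.gm * psqrt (sd.Vm X)) * sd.Pmᵀ

/-- `N(X) = ⟨G | D(X)⟩`. -/
noncomputable def Nval (sd : SpecDecomp n G) (X : Matrix (Fin n) (Fin n) ℝ) : ℝ :=
  mip G (sd.Dmat X)

end SpecDecomp


section Helpers
variable {k : Type*} [Fintype k] [DecidableEq k]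

lemma quad_single (T : Matrix k k ℝ) (i : k) (a : ℝ) :
    dotProduct (Pi.single i a) (T *ᵥ (Pi.single i a)) = a * a * T i i := by
  simp only [dotProduct, mulVec_single]
  rw [Finset.sum_eq_single i (by intro b _ hb; simp [Pi.single_eq_of_ne hb]) (by simp)]
  simp; ring

lemma quad_two (T : Matrix k k ℝ) {i j : k} (hij : i ≠ j) (a b : ℝ) :
    dotProduct (Pi.single i a + Pi.single j b) (T *ᵥ (Pi.single i a + Pi.single j b)) =
      a*a*T i i + a*b*T i j + b*a*T j i + b*b*T j j := by
  simp only [dotProduct, mulVec_add, mulVec_single, Pi.add_apply]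
  rw [Finset.sum_eq_add_of_mem i j (Finset.mem_univ i) (Finset.mem_univ j) hij
    (by intro c _ hc; simp [Pi.single_eq_of_ne hc.1, Pi.single_eq_of_ne hc.2])]
  simp [Pi.single_eq_of_ne hij, Pi.single_eq_of_ne hij.symm]; ring

lemma psd_diag_nonneg {T : Matrix k k ℝ} (hT : T.PosSemidef) (i : k) : 0 ≤ T i i := by
  have := hT.dotProduct_mulVec_nonneg (Pi.single i 1)
  rwa [star_trivial, quad_single, one_mul, one_mul] at this

lemma psd_row_zero {T : Matrix k k ℝ} (hT : T.PosSemidef) {i : k} (hi : T i i = 0) (j : k) :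
    T i j = 0 := by
  rcases eq_or_ne i j with rfl | hij
  · exact hi
  have hsym : T j i = T i j := by
    have := congrFun (congrFun hT.1.eq j) i
    simpa using this.symm
  by_contra h
  set a : ℝ := -(T j j + 1)/(2 * T i j) with ha
  have hac : a * T i j = -(T j j + 1)/2 := by rw [ha]; field_simp
  have key := hT.dotProduct_mulVec_nonneg (Pi.single i a + Pi.single j 1)
  rw [star_trivial, quad_two T hij] at key
  have e : a*a*T i i + a*1*T i j + 1*a*T j i + 1*1*T j j = 2*(a*T i j) + T j j := by
    rw [hi, hsym]; ring
  rw [e, hac] at key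
  linarith

lemma trace_diag_mul (g : k → ℝ) (M : Matrix k k ℝ) :
    (Matrix.diagonal g * M).trace = ∑ i, g i * M i i := by
  simp [Matrix.trace, Matrix.diag, Matrix.diagonal_mul]

lemma trace_diag_conj (g : k → ℝ) (S : Matrix k k ℝ) (hS : Sᵀ = S) :
    (Matrix.diagonal g * S * Matrix.diagonal g * S).trace
      = ∑ i, ∑ j, g i * g j * (S i j)^2 := by
  have hs : ∀ i j : k, S j i = S i j := fun i j => by
    have := congrFun (congrFun hS i) j; simpa using this
  rw [Matrix.mul_assoc (Matrix.diagonal g * S)]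
  simp only [Matrix.trace, Matrix.diag, Matrix.mul_apply, Matrix.diagonal_apply,
    ite_mul, zero_mul, Finset.sum_ite_eq, Finset.mem_univ, if_true]
  refine Finset.sum_congr rfl fun i _ => Finset.sum_congr rfl fun j _ => ?_
  rw [hs i j]; ring


lemma psqrt_spec {V : Matrix k k ℝ} (hV : V.PosSemidef) :
    (psqrt V).PosSemidef ∧ (psqrt V)ᵀ = psqrt V ∧ psqrt V * psqrt V = V := by
  unfold psqrt
  rw [dif_pos hV]
  set U := hV.1.eigenvectorUnitary with hU
  have hUU : (star U : Matrix k k ℝ) * (U : Matrix k k ℝ) = 1 := Unitary.coe_star_mul_self U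
  have hD : (Matrix.diagonal ((↑) ∘ (√·) ∘ hV.1.eigenvalues : k → ℝ)).PosSemidef :=
    PosSemidef.diagonal (fun i => by simp [Real.sqrt_nonneg])
  have hP : ((U : Matrix k k ℝ) * Matrix.diagonal ((↑) ∘ (√·) ∘ hV.1.eigenvalues : k → ℝ)
      * (star U : Matrix k k ℝ)).PosSemidef := by
    have := hD.mul_mul_conjTranspose_same (U : Matrix k k ℝ)
    rwa [← Matrix.star_eq_conjTranspose] at this
  refine ⟨hP, ?_, ?_⟩
  · rw [← Matrix.conjTranspose_eq_transpose_of_trivial]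
    exact hP.1
  · have hspec := hV.1.spectral_theorem
    rw [Unitary.conjStarAlgAut_apply] at hspec
    calc _ = (U : Matrix k k ℝ) * (Matrix.diagonal ((↑) ∘ (√·) ∘ hV.1.eigenvalues)
          * ((star U : Matrix k k ℝ) * (U : Matrix k k ℝ))
          * Matrix.diagonal ((↑) ∘ (√·) ∘ hV.1.eigenvalues)) * (star U : Matrix k k ℝ) := by
          simp only [Matrix.mul_assoc]
      _ = V := by
          rw [hUU, Matrix.mul_one, Matrix.diagonal_mul_diagonal]
          conv_rhs => rw [hspec]
          congr 2
          ext i j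
          rcases eq_or_ne i j with rfl | h
          · simp [Real.mul_self_sqrt (hV.eigenvalues_nonneg i)]
          · simp [h]

end Helpers

lemma main_key {n : ℕ} {G : Matrix (Fin n) (Fin n) ℝ} (hGsym : Gᵀ = G)
    (sd : SpecDecomp n G) (Xs : Matrix (Fin n) (Fin n) ℝ) (hXs : Xs ∈ Feas n) :
    FirstOrderOpt G Xs ↔ sd.Nval Xs = 0 := by
  classical
  obtain ⟨np, nm, hdim, Pp, Pm, gp, gm, hgp_pos, hgm_nonpos, hgpa, hgma,
    hPpO, hPmO, hPpPm, hPPT, hG⟩ := sd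
  simp only [SpecDecomp.Nval, SpecDecomp.Dmat, SpecDecomp.Vp, SpecDecomp.Vm]
  subst hG
  set G : Matrix (Fin n) (Fin n) ℝ :=
    Pp * Matrix.diagonal gp * Ppᵀ + Pm * Matrix.diagonal gm * Pmᵀ with hG
  have hPmPp : Pmᵀ * Pp = 0 := by
    have := congrArg Matrix.transpose hPpPm
    simpa [Matrix.transpose_mul] using this
  have hGPp : G * Pp = Pp * Matrix.diagonal gp := by
    rw [hG]
    simp [Matrix.add_mul, Matrix.mul_assoc, hPpO, hPmPp]
  have hGPm : G * Pm = Pm * Matrix.diagonal gm := by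
    rw [hG]
    simp [Matrix.add_mul, Matrix.mul_assoc, hPmO, hPpPm]
  -- trace identities
  have trP : ∀ A : Matrix (Fin np) (Fin np) ℝ,
      (G * (Pp * A * Ppᵀ)).trace = (Matrix.diagonal gp * A).trace := by
    intro A
    have h1 : G * (Pp * A * Ppᵀ) = Pp * Matrix.diagonal gp * A * Ppᵀ := by
      simp only [← Matrix.mul_assoc, hGPp]
    rw [h1, Matrix.trace_mul_comm, ← Matrix.mul_assoc, ← Matrix.mul_assoc, hPpO,
      Matrix.one_mul]
  have trM : ∀ A : Matrix (Fin nm) (Fin nm) ℝ,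
      (G * (Pm * A * Pmᵀ)).trace = (Matrix.diagonal gm * A).trace := by
    intro A
    have h1 : G * (Pm * A * Pmᵀ) = Pm * Matrix.diagonal gm * A * Pmᵀ := by
      simp only [← Matrix.mul_assoc, hGPm]
    rw [h1, Matrix.trace_mul_comm, ← Matrix.mul_assoc, ← Matrix.mul_assoc, hPmO,
      Matrix.one_mul]
  have trPM : ∀ A : Matrix (Fin np) (Fin nm) ℝ,
      (G * (Pp * A * Pmᵀ)).trace = 0 := by
    intro A
    have h1 : G * (Pp * A * Pmᵀ) = Pp * Matrix.diagonal gp * A * Pmᵀ := by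
      simp only [← Matrix.mul_assoc, hGPp]
    rw [h1, Matrix.trace_mul_comm, ← Matrix.mul_assoc, ← Matrix.mul_assoc, hPmPp]
    simp
  have trMP : ∀ A : Matrix (Fin nm) (Fin np) ℝ,
      (G * (Pm * A * Ppᵀ)).trace = 0 := by
    intro A
    have h1 : G * (Pm * A * Ppᵀ) = Pm * Matrix.diagonal gm * A * Ppᵀ := by
      simp only [← Matrix.mul_assoc, hGPm]
    rw [h1, Matrix.trace_mul_comm, ← Matrix.mul_assoc, ← Matrix.mul_assoc, hPpPm]
    simp
  -- mip decomposition
  have hmip : ∀ X : Matrix (Fin n) (Fin n) ℝ, mip G X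
      = (∑ i, gp i * (Ppᵀ * X * Pp) i i) + (∑ i, gm i * (Pmᵀ * X * Pm) i i) := by
    intro X
    show (Gᵀ * X).trace = _
    rw [hGsym, hG, Matrix.add_mul, Matrix.trace_add]
    have e1 : (Pp * Matrix.diagonal gp * Ppᵀ * X).trace
        = (Matrix.diagonal gp * (Ppᵀ * X * Pp)).trace := by
      rw [Matrix.mul_assoc, Matrix.mul_assoc, Matrix.trace_mul_comm]
      simp only [Matrix.mul_assoc]
    have e2 : (Pm * Matrix.diagonal gm * Pmᵀ * X).trace
        = (Matrix.diagonal gm * (Pmᵀ * X * Pm)).trace := by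
      rw [Matrix.mul_assoc, Matrix.mul_assoc, Matrix.trace_mul_comm]
      simp only [Matrix.mul_assoc]
    rw [e1, e2, trace_diag_mul, trace_diag_mul]
  -- PSD facts
  have hcc : ∀ {m : ℕ} (B : Matrix (Fin n) (Fin m) ℝ) {A : Matrix (Fin n) (Fin n) ℝ},
      A.PosSemidef → (Bᵀ * A * B).PosSemidef := by
    intro m B A hA
    have := hA.conjTranspose_mul_mul_same B
    rwa [Matrix.conjTranspose_eq_transpose_of_trivial] at this
  have hVpPSD : (Ppᵀ * Xs * Pp).PosSemidef := hcc Pp hXs.1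
  have hVmPSD : (Pmᵀ * (1 - Xs) * Pm).PosSemidef := hcc Pm hXs.2
  obtain ⟨hSpsd, hSsym, hSS⟩ := psqrt_spec hVpPSD
  obtain ⟨hTpsd, hTsym, hTT⟩ := psqrt_spec hVmPSD
  set S := psqrt (Ppᵀ * Xs * Pp) with hSdef
  set T := psqrt (Pmᵀ * (1 - Xs) * Pm) with hTdef
  have hNval : mip G (Pp * (S * Matrix.diagonal gp * S) * Ppᵀ
      + norm2 G • (Pp * (Ppᵀ * Xs * Pm) * Pmᵀ)
      + norm2 G • (Pm * (Pmᵀ * Xs * Pp) * Ppᵀ)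
      + Pm * (T * Matrix.diagonal gm * T) * Pmᵀ)
      = (∑ i, ∑ j, gp i * gp j * (S i j)^2) + (∑ i, ∑ j, gm i * gm j * (T i j)^2) := by
    show (Gᵀ * _).trace = _
    rw [hGsym]
    rw [Matrix.mul_add, Matrix.mul_add, Matrix.mul_add, Matrix.trace_add, Matrix.trace_add,
      Matrix.trace_add, Matrix.mul_smul, Matrix.mul_smul, Matrix.trace_smul, Matrix.trace_smul,
      trPM, trMP, smul_zero, add_zero, add_zero, trP, trM]
    rw [show Matrix.diagonal gp * (S * Matrix.diagonal gp * S)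
        = Matrix.diagonal gp * S * Matrix.diagonal gp * S by simp only [Matrix.mul_assoc],
      trace_diag_conj gp S hSsym]
    rw [show Matrix.diagonal gm * (T * Matrix.diagonal gm * T)
        = Matrix.diagonal gm * T * Matrix.diagonal gm * T by simp only [Matrix.mul_assoc],
      trace_diag_conj gm T hTsym]
  have hVp_diag : ∀ i, (Ppᵀ * Xs * Pp) i i = ∑ k, (S i k)^2 := by
    intro i
    rw [← hSS, Matrix.mul_apply]
    refine Finset.sum_congr rfl fun k _ => ?_
    have hks : S k i = S i k := by
      have := congrFun (congrFun hSsym i) k; simpa using this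
    rw [hks]; ring
  have hVm_diag : ∀ i, ((Pmᵀ * (1 - Xs) * Pm : Matrix (Fin nm) (Fin nm) ℝ) i i) = ∑ k, (T i k)^2 := by
    intro i
    rw [← hTT, Matrix.mul_apply]
    refine Finset.sum_congr rfl fun k _ => ?_
    have hks : T k i = T i k := by
      have := congrFun (congrFun hTsym i) k; simpa using this
    rw [hks]; ring
  have hPmXPm : ∀ X : Matrix (Fin n) (Fin n) ℝ,
      Pmᵀ * X * Pm = 1 - Pmᵀ * (1 - X) * Pm := by
    intro X
    have h : Pmᵀ * (1 - X) * Pm = 1 - Pmᵀ * X * Pm := by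
      rw [Matrix.mul_sub, Matrix.mul_one, Matrix.sub_mul, hPmO]
    rw [h, sub_sub_cancel]
  have hmipVal : ∀ X : Matrix (Fin n) (Fin n) ℝ, mip G X
      = (∑ i, gp i * (Ppᵀ * X * Pp) i i)
        + ((∑ i, gm i) - ∑ i, gm i * ((Pmᵀ * (1 - X) * Pm : Matrix (Fin nm) (Fin nm) ℝ) i i)) := by
    intro X
    rw [hmip X]
    congr 1
    rw [← Finset.sum_sub_distrib]
    refine Finset.sum_congr rfl fun i _ => ?_
    rw [hPmXPm X]
    simp [Matrix.sub_apply, Matrix.one_apply_eq]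
    ring
  have hX0 : Pm * Pmᵀ ∈ Feas n := by
    constructor
    · have := Matrix.posSemidef_self_mul_conjTranspose Pm
      rwa [Matrix.conjTranspose_eq_transpose_of_trivial] at this
    · have h1 : (1 : Matrix (Fin n) (Fin n) ℝ) - Pm * Pmᵀ = Pp * Ppᵀ := by
        rw [← hPPT]; abel
      rw [h1]
      have := Matrix.posSemidef_self_mul_conjTranspose Pp
      rwa [Matrix.conjTranspose_eq_transpose_of_trivial] at this
  have hmipX0 : mip G (Pm * Pmᵀ) = ∑ i, gm i := by
    rw [hmip]
    have h1 : Ppᵀ * (Pm * Pmᵀ) * Pp = 0 := by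
      rw [← Matrix.mul_assoc, hPpPm, Matrix.zero_mul, Matrix.zero_mul]
    have h2 : Pmᵀ * (Pm * Pmᵀ) * Pm = 1 := by
      rw [← Matrix.mul_assoc, hPmO, Matrix.one_mul, hPmO]
    rw [h1, h2]
    simp [Matrix.one_apply_eq]
  have hmipsub : ∀ A B : Matrix (Fin n) (Fin n) ℝ, mip G (A - B) = mip G A - mip G B := by
    intro A B
    show (Gᵀ * (A - B)).trace = _
    rw [Matrix.mul_sub, Matrix.trace_sub]
    rfl
  constructor
  · -- FOO → N = 0
    intro hFOO
    have h0 := hFOO (Pm * Pmᵀ) hX0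
    rw [hmipsub, hmipX0, hmipVal Xs] at h0
    have hA_nn : ∀ i ∈ Finset.univ, 0 ≤ gp i * (Ppᵀ * Xs * Pp) i i :=
      fun i _ => mul_nonneg (hgp_pos i).le (psd_diag_nonneg hVpPSD i)
    have hB_nn : ∀ i ∈ Finset.univ, 0 ≤ -(gm i * ((Pmᵀ * (1 - Xs) * Pm : Matrix (Fin nm) (Fin nm) ℝ) i i)) := by
      intro i _
      have := mul_nonneg (neg_nonneg.2 (hgm_nonpos i)) (psd_diag_nonneg hVmPSD i)
      nlinarith [this]
    have hAsum : 0 ≤ ∑ i, gp i * (Ppᵀ * Xs * Pp) i i := Finset.sum_nonneg hA_nn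
    have hBsum : 0 ≤ ∑ i, -(gm i * ((Pmᵀ * (1 - Xs) * Pm : Matrix (Fin nm) (Fin nm) ℝ) i i)) := Finset.sum_nonneg hB_nn
    have hBs' : (∑ i, -(gm i * ((Pmᵀ * (1 - Xs) * Pm : Matrix (Fin nm) (Fin nm) ℝ) i i)))
        = -∑ i, gm i * ((Pmᵀ * (1 - Xs) * Pm : Matrix (Fin nm) (Fin nm) ℝ) i i) := by
      rw [← Finset.sum_neg_distrib]
    rw [hBs'] at hBsum
    have hA0 : (∑ i, gp i * (Ppᵀ * Xs * Pp) i i) = 0 := by linarith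
    have hB0 : (∑ i, -(gm i * ((Pmᵀ * (1 - Xs) * Pm : Matrix (Fin nm) (Fin nm) ℝ) i i))) = 0 := by rw [hBs']; linarith
    have hApt := (Finset.sum_eq_zero_iff_of_nonneg hA_nn).1 hA0
    have hBpt := (Finset.sum_eq_zero_iff_of_nonneg hB_nn).1 hB0
    have hSzero : ∀ i k, S i k = 0 := by
      intro i k
      have hVpii : (Ppᵀ * Xs * Pp) i i = 0 :=
        (mul_eq_zero.1 (hApt i (Finset.mem_univ i))).resolve_left (ne_of_gt (hgp_pos i))
      have hsum := (hVp_diag i).symm.trans hVpii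
      have hk := (Finset.sum_eq_zero_iff_of_nonneg (fun k _ => sq_nonneg (S i k))).1 hsum
        k (Finset.mem_univ k)
      exact pow_eq_zero_iff two_ne_zero |>.1 hk
    have hTrow : ∀ i, gm i ≠ 0 → ∀ k, T i k = 0 := by
      intro i hgi k
      have hVmii : ((Pmᵀ * (1 - Xs) * Pm : Matrix (Fin nm) (Fin nm) ℝ) i i) = 0 :=
        (mul_eq_zero.1 (neg_eq_zero.1 (hBpt i (Finset.mem_univ i)))).resolve_left hgi
      have hsum := (hVm_diag i).symm.trans hVmii
      have hk := (Finset.sum_eq_zero_iff_of_nonneg (fun k _ => sq_nonneg (T i k))).1 hsum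
        k (Finset.mem_univ k)
      exact pow_eq_zero_iff two_ne_zero |>.1 hk
    rw [hNval]
    have e1 : (∑ i, ∑ j, gp i * gp j * (S i j)^2) = 0 :=
      Finset.sum_eq_zero fun i _ => Finset.sum_eq_zero fun j _ => by rw [hSzero i j]; ring
    have e2 : (∑ i, ∑ j, gm i * gm j * (T i j)^2) = 0 := by
      refine Finset.sum_eq_zero fun i _ => Finset.sum_eq_zero fun j _ => ?_
      rcases eq_or_ne (gm i) 0 with h | h
      · rw [h]; ring
      · rw [hTrow i h j]; ring
    rw [e1, e2, add_zero]
  · -- N = 0 → FOO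
    intro hN
    rw [hNval] at hN
    have tp_nn : ∀ i ∈ (Finset.univ : Finset (Fin np)), 0 ≤ ∑ j, gp i * gp j * (S i j)^2 :=
      fun i _ => Finset.sum_nonneg fun j _ =>
        mul_nonneg (mul_nonneg (hgp_pos i).le (hgp_pos j).le) (sq_nonneg _)
    have tm_nn : ∀ i ∈ (Finset.univ : Finset (Fin nm)), 0 ≤ ∑ j, gm i * gm j * (T i j)^2 :=
      fun i _ => Finset.sum_nonneg fun j _ =>
        mul_nonneg (mul_nonneg_of_nonpos_of_nonpos (hgm_nonpos i) (hgm_nonpos j)) (sq_nonneg _)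
    have hs1 : (∑ i, ∑ j, gp i * gp j * (S i j)^2) = 0 := by
      have := Finset.sum_nonneg tp_nn
      have := Finset.sum_nonneg tm_nn
      linarith
    have hs2 : (∑ i, ∑ j, gm i * gm j * (T i j)^2) = 0 := by
      have := Finset.sum_nonneg tp_nn
      have := Finset.sum_nonneg tm_nn
      linarith
    have hpt1 : ∀ i j, gp i * gp j * (S i j)^2 = 0 := by
      intro i j
      have h1 := (Finset.sum_eq_zero_iff_of_nonneg tp_nn).1 hs1 i (Finset.mem_univ i)
      exact (Finset.sum_eq_zero_iff_of_nonneg (fun j _ =>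
        mul_nonneg (mul_nonneg (hgp_pos i).le (hgp_pos j).le) (sq_nonneg _))).1 h1
        j (Finset.mem_univ j)
    have hpt2 : ∀ i j, gm i * gm j * (T i j)^2 = 0 := by
      intro i j
      have h1 := (Finset.sum_eq_zero_iff_of_nonneg tm_nn).1 hs2 i (Finset.mem_univ i)
      exact (Finset.sum_eq_zero_iff_of_nonneg (fun j _ =>
        mul_nonneg (mul_nonneg_of_nonpos_of_nonpos (hgm_nonpos i) (hgm_nonpos j))
          (sq_nonneg _))).1 h1 j (Finset.mem_univ j)
    have hSzero : ∀ i j, S i j = 0 := by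
      intro i j
      have := hpt1 i j
      have hgg : gp i * gp j ≠ 0 := ne_of_gt (mul_pos (hgp_pos i) (hgp_pos j))
      have := (mul_eq_zero.1 this).resolve_left hgg
      exact pow_eq_zero_iff two_ne_zero |>.1 this
    have hVpii0 : ∀ i, (Ppᵀ * Xs * Pp) i i = 0 := by
      intro i
      rw [hVp_diag i]
      exact Finset.sum_eq_zero fun k _ => by rw [hSzero i k]; ring
    have hgmVm0 : ∀ i, gm i * ((Pmᵀ * (1 - Xs) * Pm : Matrix (Fin nm) (Fin nm) ℝ) i i) = 0 := by
      intro i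
      rcases eq_or_ne (gm i) 0 with h | h
      · rw [h, zero_mul]
      · have hTii : T i i = 0 := by
          have := hpt2 i i
          have hgg : gm i * gm i ≠ 0 := mul_ne_zero h h
          have := (mul_eq_zero.1 this).resolve_left hgg
          exact pow_eq_zero_iff two_ne_zero |>.1 this
        have hVmii : ((Pmᵀ * (1 - Xs) * Pm : Matrix (Fin nm) (Fin nm) ℝ) i i) = 0 := by
          rw [hVm_diag i]
          exact Finset.sum_eq_zero fun k _ => by rw [psd_row_zero hTpsd hTii k]; ring
        rw [hVmii, mul_zero]
    have hmipXs : mip G Xs = ∑ i, gm i := by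
      rw [hmipVal Xs]
      have e1 : (∑ i, gp i * (Ppᵀ * Xs * Pp) i i) = 0 :=
        Finset.sum_eq_zero fun i _ => by rw [hVpii0 i, mul_zero]
      have e2 : (∑ i, gm i * ((Pmᵀ * (1 - Xs) * Pm : Matrix (Fin nm) (Fin nm) ℝ) i i)) = 0 :=
        Finset.sum_eq_zero fun i _ => hgmVm0 i
      rw [e1, e2]
      ring
    intro X hX
    rw [hmipsub, hmipVal X, hmipXs]
    have hA : 0 ≤ ∑ i, gp i * (Ppᵀ * X * Pp) i i :=
      Finset.sum_nonneg fun i _ =>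
        mul_nonneg (hgp_pos i).le (psd_diag_nonneg (hcc Pp hX.1) i)
    have hB : (∑ i, gm i * ((Pmᵀ * (1 - X) * Pm : Matrix (Fin nm) (Fin nm) ℝ) i i)) ≤ 0 :=
      Finset.sum_nonpos fun i _ => by
        nlinarith [psd_diag_nonneg (hcc Pm hX.2) i, hgm_nonpos i]
    linarith

theorem first_order_iff_Nval_eq_zero {n : ℕ}
    (f : Matrix (Fin n) (Fin n) ℝ → ℝ)
    (grad : Matrix (Fin n) (Fin n) ℝ → Matrix (Fin n) (Fin n) ℝ)
    (hgradsym : ∀ X ∈ Feas n, (grad X).IsSymm)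
    (hgrad : ∀ X ∈ Feas n, HasFDerivAt f (gradCLM (grad X)) X)
    (Xs : Matrix (Fin n) (Fin n) ℝ) (hXs : Xs ∈ Feas n)
    (sd : SpecDecomp n (grad Xs)) :
    FirstOrderOpt (grad Xs) Xs ↔ sd.Nval Xs = 0 :=
  main_key (hgradsym Xs hXs) sd Xs hXs

end BoxSDP
end

section
/- Let Xᵏ ∈ F with N(Xᵏ) > 0, let Δₖ > 0, and let αₖ be a minimizer of q(α, Xᵏ) over 0 ≤ α ≤ min{‖D(Xᵏ)‖_F / γ_max(Xᵏ), Δₖ}. Then q(αₖ, Xᵏ) ≤ f(Xᵏ) − (1/2) · min{ N(Xᵏ)² / (M₂ ‖D(Xᵏ)‖_F²), N(Xᵏ)/γ_max(Xᵏ), Δₖ N(Xᵏ)/‖D(Xᵏ)‖_F }. -/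
set_option autoImplicit false

open Matrix Set Filter

attribute [local instance] Matrix.normedAddCommGroup Matrix.normedSpace

namespace BoxSDP

open scoped Classical

lemma isSymm_psqrt {m : Type*} [Fintype m] [DecidableEq m]
    (A : Matrix m m ℝ) : (psqrt A)ᵀ = psqrt A := by
  unfold psqrt
  split
  · next h =>
      rw [← conjTranspose_eq_transpose_of_trivial]
      simp [Matrix.conjTranspose_mul, Matrix.star_eq_conjTranspose,
        Matrix.diagonal_conjTranspose, Matrix.mul_assoc]
  · simp

lemma mip_smul_right {m k : Type*} [Fintype m] [Fintype k]
    (A B : Matrix m k ℝ) (c : ℝ) : mip A (c • B) = c * mip A B := by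
  simp [mip, Matrix.mul_smul]

lemma mip_self_eq {m k : Type*} [Fintype m] [Fintype k] (A : Matrix m k ℝ) :
    mip A A = ∑ j, ∑ i, (A i j)^2 := by
  simp [mip, Matrix.trace, Matrix.diag, Matrix.mul_apply, sq]

lemma mip_self_pos {m k : Type*} [Fintype m] [Fintype k]
    (A : Matrix m k ℝ) (hA : A ≠ 0) : 0 < mip A A := by
  rw [mip_self_eq]
  have h0 : (0:ℝ) ≤ ∑ j, ∑ i, (A i j)^2 := by positivity
  rcases h0.eq_or_lt with h | h
  · exfalso
    apply hA
    ext i j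
    have h1 := (Finset.sum_eq_zero_iff_of_nonneg
      (fun j _ => by positivity : ∀ j ∈ Finset.univ, (0:ℝ) ≤ ∑ i, (A i j)^2)).mp h.symm
    have h2 := (Finset.sum_eq_zero_iff_of_nonneg
      (fun i _ => by positivity : ∀ i ∈ Finset.univ, (0:ℝ) ≤ (A i j)^2)).mp
      (h1 j (Finset.mem_univ j))
    have h3 := h2 i (Finset.mem_univ i)
    have := pow_eq_zero_iff (n := 2) (by norm_num) |>.mp h3
    simpa using this
  · exact h

lemma hform_smul {n : ℕ}
    (H : Matrix (Fin n) (Fin n) ℝ →L[ℝ] Matrix (Fin n) (Fin n) ℝ)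
    (c : ℝ) (A : Matrix (Fin n) (Fin n) ℝ) :
    hform H (c • A) (c • A) = c^2 * hform H A A := by
  simp [hform, _root_.map_smul, mip, Matrix.transpose_smul, Matrix.smul_mul,
    Matrix.mul_smul, sq, mul_assoc]

lemma Dmat_isSymm {n : ℕ} {G : Matrix (Fin n) (Fin n) ℝ}
    (sd : SpecDecomp n G) (X : Matrix (Fin n) (Fin n) ℝ) (hX : Xᵀ = X) :
    (sd.Dmat X).IsSymm := by
  show (sd.Dmat X)ᵀ = sd.Dmat X
  unfold SpecDecomp.Dmat SpecDecomp.Vp SpecDecomp.Vm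
  simp only [Matrix.transpose_add, Matrix.transpose_smul, Matrix.transpose_mul,
    Matrix.transpose_transpose, Matrix.diagonal_transpose, hX,
    isSymm_psqrt, Matrix.mul_assoc]
  abel

theorem q_decrease_bound {n : ℕ}
    (f : Matrix (Fin n) (Fin n) ℝ → ℝ)
    (grad : Matrix (Fin n) (Fin n) ℝ → Matrix (Fin n) (Fin n) ℝ)
    (hgradsym : ∀ X ∈ Feas n, (grad X).IsSymm)
    (hgrad : ∀ X ∈ Feas n, HasFDerivAt f (gradCLM (grad X)) X)
    (hessOp : Matrix (Fin n) (Fin n) ℝ →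
      Matrix (Fin n) (Fin n) ℝ →L[ℝ] Matrix (Fin n) (Fin n) ℝ)
    (hhess : ∀ X ∈ Feas n, HasFDerivAt grad (hessOp X) X)
    (M₂ : ℝ)
    (hM2 : IsGreatest {r : ℝ | ∃ X ∈ Feas n, ∃ D : Matrix (Fin n) (Fin n) ℝ,
      D.IsSymm ∧ D ≠ 0 ∧ r = |hform (hessOp X) D D| / mip D D} M₂)
    (hM2pos : 0 < M₂)
    (Xk : Matrix (Fin n) (Fin n) ℝ) (hXk : Xk ∈ Feas n)
    (sd : SpecDecomp n (grad Xk))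
    (hN : 0 < sd.Nval Xk)
    (Δk : ℝ) (hΔk : 0 < Δk)
    (S : Matrix (Fin n) (Fin n) ℝ)
    (hS : S = (fnorm (sd.Dmat Xk))⁻¹ • sd.Dmat Xk)
    (q : ℝ → ℝ)
    (hq : ∀ a : ℝ, q a = f Xk - a * mip (grad Xk) S
        + a ^ 2 / 2 * hform (hessOp Xk) S S)
    (αk : ℝ)
    (hαmem : αk ∈ Set.Icc 0 (min (fnorm (sd.Dmat Xk) / norm2 (grad Xk)) Δk))
    (hαmin : ∀ a ∈ Set.Icc 0 (min (fnorm (sd.Dmat Xk) / norm2 (grad Xk)) Δk),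
      q αk ≤ q a) :
    q αk ≤ f Xk - (1 / 2) * min (min
        (sd.Nval Xk ^ 2 / (M₂ * fnorm (sd.Dmat Xk) ^ 2))
        (sd.Nval Xk / norm2 (grad Xk)))
        (Δk * sd.Nval Xk / fnorm (sd.Dmat Xk)) := by
  classical
  set D := sd.Dmat Xk with hDdef
  set d := fnorm D with hddef
  set gam := norm2 (grad Xk) with hgamdef
  set N := sd.Nval Xk with hNdef
  set h := hform (hessOp Xk) S S with hhdef
  have hND : N = mip (grad Xk) D := by rw [hNdef, hDdef]; rfl
  have hNpos : 0 < N := hN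
  have hDne : D ≠ 0 := by
    intro h0
    rw [hND, h0] at hNpos
    simp [mip] at hNpos
  have hmipDD : 0 < mip D D := mip_self_pos D hDne
  have hdpos : 0 < d := by
    rw [hddef]; exact Real.sqrt_pos.mpr hmipDD
  have hd2 : d ^ 2 = mip D D := Real.sq_sqrt hmipDD.le
  have hXsym : Xkᵀ = Xk := by
    rw [← conjTranspose_eq_transpose_of_trivial]; exact hXk.1.1
  have hDsymm : D.IsSymm := Dmat_isSymm sd Xk hXsym
  -- gradient term
  have hgS : mip (grad Xk) S = N / d := by
    rw [hS, mip_smul_right, ← hND]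
    field_simp
  -- Hessian bound
  have hhb : |h| ≤ M₂ := by
    have h1 : |hform (hessOp Xk) D D| / mip D D ≤ M₂ :=
      hM2.2 ⟨Xk, hXk, D, hDsymm, hDne, rfl⟩
    have h2 : |hform (hessOp Xk) D D| ≤ M₂ * mip D D := by
      rw [div_le_iff₀ hmipDD] at h1
      linarith
    have h3 : h = d⁻¹ ^ 2 * hform (hessOp Xk) D D := by
      rw [hhdef, hS, hform_smul]
    rw [h3, abs_mul, abs_pow, abs_inv, abs_of_pos hdpos]
    have h4 : (d⁻¹) ^ 2 * |hform (hessOp Xk) D D| ≤ (d⁻¹) ^ 2 * (M₂ * mip D D) := by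
      apply mul_le_mul_of_nonneg_left h2 (by positivity)
    calc d⁻¹ ^ 2 * |hform (hessOp Xk) D D| ≤ d⁻¹ ^ 2 * (M₂ * mip D D) := h4
      _ = M₂ := by rw [← hd2]; field_simp
  have hq' : ∀ a : ℝ, q a = f Xk - a * (N / d) + a ^ 2 / 2 * h := by
    intro a
    rw [hq a, hgS]
  -- trivial case: RHS ≥ f Xk
  have h0mem : (0:ℝ) ∈ Set.Icc 0 (min (d / gam) Δk) :=
    ⟨le_refl 0, le_trans hαmem.1 hαmem.2⟩
  have hq0 : q αk ≤ f Xk := by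
    have := hαmin 0 h0mem
    rw [hq' 0] at this
    simpa using this
  set m3 := min (min (N ^ 2 / (M₂ * d ^ 2)) (N / gam)) (Δk * N / d) with hm3def
  show q αk ≤ f Xk - 1 / 2 * m3
  rcases le_or_gt m3 0 with hm3 | hm3
  · linarith
  -- nontrivial case : all three quantities positive
  have hgampos : 0 < gam := by
    by_contra hcon
    push_neg at hcon
    have : N / gam ≤ 0 := div_nonpos_of_nonneg_of_nonpos hNpos.le hcon
    have : m3 ≤ 0 := le_trans (le_trans (min_le_left _ _) (min_le_right _ _)) this
    linarith
  set T := min (d / gam) Δk with hTdef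
  have hTpos : 0 < T := lt_min (div_pos hdpos hgampos) hΔk
  have hTmem : T ∈ Set.Icc 0 (min (d / gam) Δk) := ⟨hTpos.le, le_refl T⟩
  have hTg : T * (N / d) = min (N / gam) (Δk * N / d) := by
    rw [hTdef, min_mul_of_nonneg _ _ (by positivity : (0:ℝ) ≤ N / d)]
    congr 1
    · field_simp
    · ring
  have hm3le : m3 ≤ T * (N / d) := by
    rw [hTg]
    exact le_min (le_trans (min_le_left _ _) (min_le_right _ _)) (min_le_right _ _)
  rcases le_or_gt h 0 with hh | hh
  · -- nonpositive curvature: use a = T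
    have hqT := hαmin T hTmem
    rw [hq' T] at hqT
    nlinarith [sq_nonneg T]
  · -- positive curvature
    have hhM : h ≤ M₂ := le_trans (le_abs_self h) hhb
    set g := N / d with hgdef
    have hgpos : 0 < g := by positivity
    rcases le_or_gt (g / h) T with hsub | hsub
    · -- interior minimizer
      have hmem : g / h ∈ Set.Icc 0 (min (d / gam) Δk) := ⟨by positivity, hsub⟩
      have hqa := hαmin (g / h) hmem
      rw [hq' (g / h)] at hqa
      have heq : f Xk - g / h * g + (g / h) ^ 2 / 2 * h = f Xk - g ^ 2 / (2 * h) := by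
        field_simp
        ring
      rw [heq] at hqa
      have hA1 : N ^ 2 / (M₂ * d ^ 2) = g ^ 2 / M₂ := by
        rw [hgdef]
        field_simp
      have hm3A1 : m3 ≤ g ^ 2 / M₂ := by
        rw [← hA1]
        exact le_trans (min_le_left _ _) (min_le_left _ _)
      have hdiv : g ^ 2 / M₂ ≤ g ^ 2 / h :=
        div_le_div_of_nonneg_left (sq_nonneg g) hh hhM
      have : m3 / 2 ≤ g ^ 2 / (2 * h) := by
        have : g ^ 2 / (2 * h) = (g ^ 2 / h) / 2 := by ring
        rw [this]
        linarith
      linarith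
    · -- boundary minimizer
      have hTh : T * h < g := (lt_div_iff₀ hh).mp hsub
      have hqT := hαmin T hTmem
      rw [hq' T] at hqT
      have hT2 : T ^ 2 / 2 * h ≤ T * g / 2 := by nlinarith
      linarith


end BoxSDP
end
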